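/- arXiv:2104.00075 — 4 statements merged into one kernel-verified Lean document; each statement's English description precedes it below -/
import Mathlib

section
/- Let Λ be a finite nonempty type, let N be a natural number, let Π : EuclideanSpace ℝ (Fin N) → Λ → ℝ be such that for every λ ∈ Λ the map θ ↦ Π(θ, λ) is differentiable, Π(θ, λ) > 0 for all θ and λ, and ∑_{λ∈Λ} Π(θ, λ) = 1 for every θ. Let R : Λ → ℝ and let μ ∈ ℝ. Define E_θ[f] = ∑_{λ∈Λ} Π(θ, λ) f(λ) and the risk-sensitive return J̃(θ) = E_θ[R] − (μ/2)·(E_θ[R²] − (E_θ[R])²). Then for every θ, the gradient of J̃ at θ equals ∑_{λ∈Λ} Π(θ, λ) · ((1 + μ·E_θ[R])·R(λ) − (μ/2)·R(λ)²) · ∇_θ(log Π(·, λ))(θ). -/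
/-- Proposition 1 (exact mean–variance form): the gradient of the second-order
approximation of the risk-sensitive episodic return
`J̃(θ) = E_θ[R] − (μ/2)·Var_θ(R)` over a finite trajectory space `Λ` equals
`∑ λ, Π(θ,λ) · ((1 + μ E_θ[R]) R(λ) − (μ/2) R(λ)²) · ∇_θ log Π(·,λ)`. -/
theorem risk_sensitive_policy_gradient
    {Λ : Type*} [Fintype Λ] [Nonempty Λ] (N : ℕ)
    (P : EuclideanSpace ℝ (Fin N) → Λ → ℝ)
    (hdiff : ∀ l : Λ, Differentiable ℝ (fun θ => P θ l))
    (hpos : ∀ (θ : EuclideanSpace ℝ (Fin N)) (l : Λ), 0 < P θ l)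
    (hsum : ∀ θ : EuclideanSpace ℝ (Fin N), ∑ l : Λ, P θ l = 1)
    (R : Λ → ℝ) (μ : ℝ) :
    ∀ θ : EuclideanSpace ℝ (Fin N),
      gradient (fun θ' =>
          (∑ l : Λ, P θ' l * R l) -
            (μ / 2) * ((∑ l : Λ, P θ' l * (R l) ^ 2) - (∑ l : Λ, P θ' l * R l) ^ 2)) θ
        = ∑ l : Λ,
            (P θ l * ((1 + μ * ∑ l' : Λ, P θ l' * R l') * R l - (μ / 2) * (R l) ^ 2)) •
              gradient (fun θ' => Real.log (P θ' l)) θ := by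
  intro θ
  classical
  set D : Λ → (EuclideanSpace ℝ (Fin N) →L[ℝ] ℝ) :=
    fun l => fderiv ℝ (fun θ' => P θ' l) θ with hD
  have hDl : ∀ l, HasFDerivAt (fun θ' => P θ' l) (D l) θ :=
    fun l => ((hdiff l).differentiableAt).hasFDerivAt
  set E : ℝ := ∑ l : Λ, P θ l * R l with hE
  -- derivative of the mean
  have hmean : HasFDerivAt (fun θ' => ∑ l : Λ, P θ' l * R l)
      (∑ l : Λ, R l • D l) θ := by
    exact HasFDerivAt.fun_sum (fun l _ => (hDl l).mul_const (R l))
  have hmean2 : HasFDerivAt (fun θ' => ∑ l : Λ, P θ' l * (R l) ^ 2)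
      (∑ l : Λ, (R l) ^ 2 • D l) θ := by
    exact HasFDerivAt.fun_sum (fun l _ => (hDl l).mul_const ((R l) ^ 2))
  have hsq : HasFDerivAt (fun θ' => (∑ l : Λ, P θ' l * R l) ^ 2)
      (E • (∑ l : Λ, R l • D l) + E • (∑ l : Λ, R l • D l)) θ := by
    simpa [pow_two, hE] using hmean.fun_mul hmean
  have hJ : HasFDerivAt (fun θ' =>
      (∑ l : Λ, P θ' l * R l) -
        (μ / 2) * ((∑ l : Λ, P θ' l * (R l) ^ 2) - (∑ l : Λ, P θ' l * R l) ^ 2))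
      ((∑ l : Λ, R l • D l) -
        (μ / 2) • ((∑ l : Λ, (R l) ^ 2 • D l) -
          (E • (∑ l : Λ, R l • D l) + E • (∑ l : Λ, R l • D l)))) θ :=
    hmean.sub ((hmean2.sub hsq).const_mul (μ / 2))
  have hgradJ : gradient (fun θ' =>
      (∑ l : Λ, P θ' l * R l) -
        (μ / 2) * ((∑ l : Λ, P θ' l * (R l) ^ 2) - (∑ l : Λ, P θ' l * R l) ^ 2)) θ
      = (InnerProductSpace.toDual ℝ (EuclideanSpace ℝ (Fin N))).symm
          ((∑ l : Λ, R l • D l) -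
            (μ / 2) • ((∑ l : Λ, (R l) ^ 2 • D l) -
              (E • (∑ l : Λ, R l • D l) + E • (∑ l : Λ, R l • D l)))) := by
    rw [gradient, hJ.fderiv]
  set s : Λ → EuclideanSpace ℝ (Fin N) :=
    fun l => (InnerProductSpace.toDual ℝ (EuclideanSpace ℝ (Fin N))).symm (D l) with hs
  have hgradlog : ∀ l, gradient (fun θ' => Real.log (P θ' l)) θ = (P θ l)⁻¹ • s l := by
    intro l
    have hlog : HasFDerivAt (fun θ' => Real.log (P θ' l)) ((P θ l)⁻¹ • D l) θ :=
      (hDl l).log (ne_of_gt (hpos θ l))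
    rw [gradient, hlog.fderiv, map_smul]
  rw [hgradJ]
  simp only [map_sub, map_add, map_smul, map_sum, hgradlog, Finset.smul_sum, smul_sub,
    smul_add, smul_smul]
  rw [← Finset.sum_add_distrib, ← Finset.sum_sub_distrib, ← Finset.sum_sub_distrib]
  refine Finset.sum_congr rfl fun l _ => ?_
  have hP : P θ l ≠ 0 := ne_of_gt (hpos θ l)
  match_scalars
  field_simp
  ring
end

section
/- Let Λ be a finite nonempty type, let N be a natural number, let Π : EuclideanSpace ℝ (Fin N) → Λ → ℝ be such that for every λ ∈ Λ the map θ ↦ Π(θ, λ) is differentiable, Π(θ, λ) > 0 for all θ and λ, and ∑_{λ∈Λ} Π(θ, λ) = 1 for every θ. Let R : Λ → ℝ, write E_θ[f] = ∑_{λ∈Λ} Π(θ, λ) f(λ) and Var_θ(R) = E_θ[R²] − (E_θ[R])². Then for every θ, the gradient of the map θ ↦ Var_θ(R) at θ equals ∑_{λ∈Λ} Π(θ, λ) · (R(λ)² − 2·E_θ[R]·R(λ)) · ∇_θ(log Π(·, λ))(θ). -/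
/-- Gradient of the variance of the episodic reward in score-function form:
`∇_θ Var_θ(R) = ∑ λ, Π(θ,λ) (R(λ)² − 2 E_θ[R] R(λ)) ∇_θ log Π(·,λ)`. -/
theorem variance_gradient_score_form
    {Λ : Type*} [Fintype Λ] [Nonempty Λ] (N : ℕ)
    (P : EuclideanSpace ℝ (Fin N) → Λ → ℝ)
    (hdiff : ∀ l : Λ, Differentiable ℝ (fun θ => P θ l))
    (hpos : ∀ (θ : EuclideanSpace ℝ (Fin N)) (l : Λ), 0 < P θ l)
    (hsum : ∀ θ : EuclideanSpace ℝ (Fin N), ∑ l : Λ, P θ l = 1)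
    (R : Λ → ℝ) :
    ∀ θ : EuclideanSpace ℝ (Fin N),
      gradient (fun θ' =>
          (∑ l : Λ, P θ' l * (R l) ^ 2) - (∑ l : Λ, P θ' l * R l) ^ 2) θ
        = ∑ l : Λ,
            (P θ l * ((R l) ^ 2 - 2 * (∑ l' : Λ, P θ l' * R l') * R l)) •
              gradient (fun θ' => Real.log (P θ' l)) θ := by
  intro θ
  classical
  set g : Λ → (EuclideanSpace ℝ (Fin N)) →L[ℝ] ℝ :=
    fun l => fderiv ℝ (fun θ' => P θ' l) θ with hgdef
  have hg : ∀ l, HasFDerivAt (fun θ' => P θ' l) (g l) θ :=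
    fun l => (hdiff l θ).hasFDerivAt
  set E : ℝ := ∑ l' : Λ, P θ l' * R l' with hE
  have hlog : ∀ l, gradient (fun θ' => Real.log (P θ' l)) θ
      = (InnerProductSpace.toDual ℝ (EuclideanSpace ℝ (Fin N))).symm ((P θ l)⁻¹ • g l) := by
    intro l
    have h := (hg l).log (ne_of_gt (hpos θ l))
    exact (hasFDerivAt_iff_hasGradientAt.mp h).gradient
  have h1 : HasFDerivAt (fun θ' => ∑ l : Λ, P θ' l * (R l) ^ 2)
      (∑ l : Λ, (R l) ^ 2 • g l) θ := by
    apply HasFDerivAt.fun_sum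
    intro l _
    simpa using (hg l).mul_const ((R l) ^ 2)
  have h2 : HasFDerivAt (fun θ' => ∑ l : Λ, P θ' l * R l)
      (∑ l : Λ, R l • g l) θ := by
    apply HasFDerivAt.fun_sum
    intro l _
    simpa using (hg l).mul_const (R l)
  have h3 : HasFDerivAt (fun θ' => (∑ l : Λ, P θ' l * R l) ^ 2)
      ((2 * E) • (∑ l : Λ, R l • g l)) θ := by
    have h := h2.fun_mul h2
    have : (2 * E) • (∑ l : Λ, R l • g l)
        = E • (∑ l : Λ, R l • g l) + E • (∑ l : Λ, R l • g l) := by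
      rw [two_mul, add_smul]
    rw [this]
    simpa [pow_two] using h
  have htot : HasFDerivAt (fun θ' =>
      (∑ l : Λ, P θ' l * (R l) ^ 2) - (∑ l : Λ, P θ' l * R l) ^ 2)
      ((∑ l : Λ, (R l) ^ 2 • g l) - (2 * E) • (∑ l : Λ, R l • g l)) θ := h1.sub h3
  rw [(hasFDerivAt_iff_hasGradientAt.mp htot).gradient]
  simp only [hlog, map_sub, map_smul, map_sum]
  rw [Finset.smul_sum, ← Finset.sum_sub_distrib]
  refine Finset.sum_congr rfl fun l _ => ?_
  have hne : P θ l ≠ 0 := ne_of_gt (hpos θ l)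
  simp only [smul_smul]
  rw [← sub_smul]
  congr 1
  field_simp
end

section
/- Let Λ be a finite nonempty type, let p : Λ → ℝ satisfy p(λ) ≥ 0 for all λ and ∑_{λ∈Λ} p(λ) = 1, and let R : Λ → ℝ. Write E[R] = ∑_{λ∈Λ} p(λ)·R(λ) and Var(R) = ∑_{λ∈Λ} p(λ)·R(λ)² − (E[R])². Define, for μ ≠ 0, CE(μ) = −(1/μ)·log(∑_{λ∈Λ} p(λ)·exp(−μ·R(λ))). Then the limit as μ → 0 (over μ ≠ 0) of (CE(μ) − E[R])/μ equals −(1/2)·Var(R). -/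
open Filter

/-- Second-order Taylor expansion of the entropic (EVaR) objective: with
`CE(μ) = −(1/μ)·log ∑ λ, p(λ)·exp(−μ R(λ))`, the quotient `(CE(μ) − E[R])/μ`
tends to `−(1/2)·Var(R)` as `μ → 0` over `μ ≠ 0`. -/
theorem evar_second_order_expansion
    {Λ : Type*} [Fintype Λ] [Nonempty Λ]
    (p : Λ → ℝ) (hnn : ∀ l : Λ, 0 ≤ p l) (hsum : ∑ l : Λ, p l = 1)
    (R : Λ → ℝ) :
    Tendsto (fun μ : ℝ =>
        ((-(1 / μ) * Real.log (∑ l : Λ, p l * Real.exp (-μ * R l))) -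
            ∑ l : Λ, p l * R l) / μ)
      (nhdsWithin 0 {(0 : ℝ)}ᶜ)
      (nhds (-(1 / 2) * ((∑ l : Λ, p l * (R l) ^ 2) - (∑ l : Λ, p l * R l) ^ 2))) := by
  set E : ℝ := ∑ l : Λ, p l * R l with hE
  set S : ℝ → ℝ := fun μ => ∑ l : Λ, p l * Real.exp (-μ * R l) with hSdef
  set S1 : ℝ → ℝ := fun μ => ∑ l : Λ, p l * (-R l) * Real.exp (-μ * R l) with hS1def
  set S2 : ℝ → ℝ := fun μ => ∑ l : Λ, p l * R l ^ 2 * Real.exp (-μ * R l) with hS2def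
  -- positivity of S
  have hSpos : ∀ μ : ℝ, 0 < S μ := by
    intro μ
    have hex : ∃ l : Λ, 0 < p l := by
      by_contra h
      push_neg at h
      have : ∀ l : Λ, p l = 0 := fun l => le_antisymm (h l) (hnn l)
      simp [this] at hsum
    obtain ⟨l0, hl0⟩ := hex
    apply Finset.sum_pos'
    · intro i _
      exact mul_nonneg (hnn i) (Real.exp_pos _).le
    · exact ⟨l0, Finset.mem_univ l0, mul_pos hl0 (Real.exp_pos _)⟩
  have hS0 : S 0 = 1 := by simp [hSdef, hsum]
  have hS10 : S1 0 = -E := by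
    rw [hS1def, hE, ← Finset.sum_neg_distrib]
    simp only [Real.exp_zero]
    congr 1 with l
    simp
  have hS20 : S2 0 = ∑ l : Λ, p l * R l ^ 2 := by simp [hS2def]
  -- derivatives
  have hS : ∀ μ : ℝ, HasDerivAt S (S1 μ) μ := by
    intro μ
    have : HasDerivAt (fun μ : ℝ => ∑ l : Λ, p l * Real.exp (-μ * R l))
        (∑ l : Λ, p l * (-R l) * Real.exp (-μ * R l)) μ := by
      apply HasDerivAt.fun_sum
      intro l _
      have h1 : HasDerivAt (fun μ : ℝ => -μ * R l) (-R l) μ := by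
        simpa using ((hasDerivAt_id μ).neg.mul_const (R l))
      have := (h1.exp).const_mul (p l)
      refine this.congr_deriv ?_
      ring
    exact this
  have hS1 : ∀ μ : ℝ, HasDerivAt S1 (S2 μ) μ := by
    intro μ
    have : HasDerivAt (fun μ : ℝ => ∑ l : Λ, p l * (-R l) * Real.exp (-μ * R l))
        (∑ l : Λ, p l * R l ^ 2 * Real.exp (-μ * R l)) μ := by
      apply HasDerivAt.fun_sum
      intro l _
      have h1 : HasDerivAt (fun μ : ℝ => -μ * R l) (-R l) μ := by
        simpa using ((hasDerivAt_id μ).neg.mul_const (R l))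
      have := (h1.exp).const_mul (p l * (-R l))
      refine this.congr_deriv ?_
      ring
    exact this
  set V : ℝ := (∑ l : Λ, p l * R l ^ 2) - E ^ 2 with hV
  -- φ = S1/S has derivative V at 0
  have hφ : HasDerivAt (fun μ => S1 μ / S μ) V 0 := by
    have := (hS1 0).div (hS 0) (hSpos 0).ne'
    refine this.congr_deriv ?_
    rw [hS0, hS10, hS20, hV]
    ring
  have hφ0 : S1 0 / S 0 = -E := by rw [hS0, hS10]; simp
  -- slope limit
  have hslope : Tendsto (fun μ : ℝ => (S1 μ / S μ + E) / μ) (nhdsWithin 0 {(0:ℝ)}ᶜ) (nhds V) := by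
    have := hasDerivAt_iff_tendsto_slope.mp hφ
    refine this.congr' ?_
    filter_upwards [self_mem_nhdsWithin] with μ hμ
    simp only [slope_def_field, hφ0, sub_zero, sub_neg_eq_add]
  -- L'Hôpital
  have hF : ∀ μ : ℝ, HasDerivAt (fun μ => Real.log (S μ) + μ * E) (S1 μ / S μ + E) μ := by
    intro μ
    have := ((hS μ).log (hSpos μ).ne').add ((hasDerivAt_id μ).mul_const E)
    refine this.congr_deriv ?_; ring
  have hG : ∀ μ : ℝ, HasDerivAt (fun μ : ℝ => μ ^ 2) (2 * μ) μ := by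
    intro μ
    simpa using (hasDerivAt_pow 2 μ)
  have hdiv : Tendsto (fun μ : ℝ => (S1 μ / S μ + E) / (2 * μ))
      (nhdsWithin 0 {(0:ℝ)}ᶜ) (nhds (V / 2)) := by
    have := hslope.div_const 2
    refine this.congr ?_
    intro μ
    rw [div_div, mul_comm μ 2]
  have hcont : ContinuousAt S 0 := (hS 0).continuousAt
  have hFlim : Tendsto (fun μ => Real.log (S μ) + μ * E) (nhdsWithin 0 {(0:ℝ)}ᶜ) (nhds 0) := by
    have hc : ContinuousAt (fun μ => Real.log (S μ) + μ * E) 0 :=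
      ((Real.continuousAt_log (hSpos 0).ne').comp hcont).add (continuousAt_id.mul continuousAt_const)
    have := hc.continuousWithinAt (s := {(0:ℝ)}ᶜ)
    simpa [hS0] using this.tendsto
  have hGlim : Tendsto (fun μ : ℝ => μ ^ 2) (nhdsWithin 0 {(0:ℝ)}ᶜ) (nhds 0) := by
    have : ContinuousAt (fun μ : ℝ => μ ^ 2) 0 := by fun_prop
    simpa using (this.continuousWithinAt (s := {(0:ℝ)}ᶜ)).tendsto
  have hlhop : Tendsto (fun μ : ℝ => (Real.log (S μ) + μ * E) / μ ^ 2)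
      (nhdsWithin 0 {(0:ℝ)}ᶜ) (nhds (V / 2)) := by
    apply HasDerivAt.lhopital_zero_nhdsNE
    · filter_upwards with μ; exact hF μ
    · filter_upwards with μ; exact hG μ
    · filter_upwards [self_mem_nhdsWithin] with μ hμ
      simpa using hμ
    · exact hFlim
    · exact hGlim
    · exact hdiv
  have hval : (-(1/2 : ℝ)) * ((∑ l : Λ, p l * R l ^ 2) - E ^ 2) = -(V/2) := by
    rw [hV]; ring
  rw [hval]
  refine Tendsto.congr' ?_ hlhop.neg
  filter_upwards [self_mem_nhdsWithin] with μ hμ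
  have hμ0 : μ ≠ 0 := hμ
  show -((Real.log (S μ) + μ * E) / μ ^ 2) = _
  simp only [hSdef, neg_mul]
  field_simp
  ring_nf
end

section
/- Let ι be a finite nonempty type and for each m ∈ ι let E_m be a finite-dimensional real inner product space; equip the product E = PiLp 2 E_m with its L² inner product. Let J : E → ℝ be differentiable with continuous gradient ∇J : E → E, let α ∈ ℝ with α ≠ 0, and let z : ℕ → E satisfy z_{n+1} = z_n + α • ∇J(z_n) for all n. If z_n converges to z* ∈ E, then for every agent m ∈ ι, the gradient of the section x ↦ J(Function.update z* m x) at z*(m) is zero. -/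
open Filter

/-- First-order form of Theorem 2 of the paper: at the convergence point of the
gradient-update algorithm on the common payoff `J` over the `L²` product
parameter space, each agent's section of `J` is stationary at its block of the
limit point (no first-order improving unilateral deviation). -/
theorem gradient_ascent_limit_blockwise_stationary
    {ι : Type*} [Fintype ι] [Nonempty ι] [DecidableEq ι]
    {E : ι → Type*} [∀ m, NormedAddCommGroup (E m)] [∀ m, InnerProductSpace ℝ (E m)]
    [∀ m, FiniteDimensional ℝ (E m)]
    (J : PiLp 2 E → ℝ) (hJ : Differentiable ℝ J)
    (hgrad : Continuous (gradient J))
    (α : ℝ) (hα : α ≠ 0)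
    (z : ℕ → PiLp 2 E)
    (hz : ∀ n : ℕ, z (n + 1) = z n + α • gradient J (z n))
    (zstar : PiLp 2 E) (hconv : Tendsto z atTop (nhds zstar)) :
    ∀ m : ι,
      gradient (fun x : E m => J (WithLp.toLp 2 (Function.update zstar m x))) (zstar m) = 0 := by
  -- Step 1: the gradient vanishes at the limit.
  have hsub : Tendsto (fun n => z (n + 1) - z n) atTop (nhds 0) := by
    have h1 : Tendsto (fun n => z (n + 1)) atTop (nhds zstar) :=
      hconv.comp (tendsto_add_atTop_nat 1)
    simpa using h1.sub hconv
  have heq : (fun n => z (n + 1) - z n) = fun n => α • gradient J (z n) := by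
    funext n; rw [hz n]; abel
  have h2 : Tendsto (fun n => α • gradient J (z n)) atTop (nhds (α • gradient J zstar)) :=
    ((hgrad.tendsto zstar).comp hconv).const_smul α
  have h3 : α • gradient J zstar = 0 := by
    have := hsub
    rw [heq] at this
    exact tendsto_nhds_unique this h2 ▸ rfl
  have hg0 : gradient J zstar = (0 : PiLp 2 E) := by
    rcases smul_eq_zero.mp h3 with h | h
    · exact absurd h hα
    · exact h
  have hfd0 : fderiv ℝ J zstar = 0 := by
    have h := (hJ.differentiableAt (x := zstar)).hasGradientAt
    rw [hg0] at h
    have := h.hasFDerivAt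
    simpa using this.fderiv
  intro m
  -- Step 2: the section map is affine with linear part `single m`.
  let L : E m →L[ℝ] PiLp 2 E :=
    ((PiLp.continuousLinearEquiv 2 ℝ E).symm : (∀ i, E i) →L[ℝ] PiLp 2 E).comp
      (LinearMap.toContinuousLinearMap (LinearMap.single ℝ E m))
  let c : PiLp 2 E := zstar - L (zstar m)
  let g : E m → PiLp 2 E := fun x => c + L x
  have hL : ∀ (x : E m) (i : ι), L x i = Pi.single m x i := fun x i => rfl
  have hupdate : ∀ x : E m, Function.update zstar m x = g x := by
    intro x
    funext i
    by_cases h : i = m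
    · subst h
      simp [g, c, hL, Pi.single_apply]
    · simp [g, c, hL, Function.update_of_ne h, Pi.single_apply, h]
  have hgder : HasFDerivAt g L (zstar m) := L.hasFDerivAt.const_add c
  have hgz : g (zstar m) = zstar := by
    apply WithLp.ofLp_injective
    rw [← hupdate (zstar m)]
    exact Function.update_eq_self _ _
  have hJder : HasFDerivAt J (0 : PiLp 2 E →L[ℝ] ℝ) (g (zstar m)) := by
    rw [hgz]
    have := (hJ.differentiableAt (x := zstar)).hasFDerivAt
    rwa [hfd0] at this
  have hfun : (fun x : E m => J (WithLp.toLp 2 (Function.update zstar m x))) = fun x => J (g x) :=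
    funext fun x => congrArg J (by rw [hupdate x, WithLp.toLp_ofLp])
  have hcomp : HasFDerivAt (fun x : E m => J (g x))
      ((0 : PiLp 2 E →L[ℝ] ℝ).comp L) (zstar m) := hJder.comp (zstar m) hgder
  rw [hfun]
  have h0 : HasFDerivAt (fun x : E m => J (g x)) (0 : E m →L[ℝ] ℝ) (zstar m) := by
    simpa using hcomp
  have hgr := h0.hasGradientAt
  simpa using hgr.gradient
end
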